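/- Under the hypotheses of Theorem 1.3, every state σ on (G, G⁺) (with respect to u = u¹ + u²) satisfies σ = σ(u¹)σ₁ + σ(u²)σ₂, where σ₁, σ₂ are the states with σ₁(u¹) = σ₂(u²) = 1, σ₁(u²) = σ₂(u¹) = 0. In particular σ₁ and σ₂ are the only extremal states of (G, G⁺). -/

import Mathlib

open scoped BigOperators

/-- The action of the block matrix `[[Aₙ^{1,1}, Aₙ^{1,2}],[Aₙ^{2,1}, Aₙ^{2,2}]]`
on `ℤ^{Jₙ} ⊕ ℤ^{Jₙ}`. -/
def blockStep (J : ℕ → ℕ) (A : ∀ n, Fin 2 → Fin 2 → Fin (J (n+1)) → Fin (J n) → ℤ)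
    (n : ℕ) (x : (Fin (J n) → ℤ) × (Fin (J n) → ℤ)) :
    (Fin (J (n+1)) → ℤ) × (Fin (J (n+1)) → ℤ) :=
  (fun j' => ∑ j, (A n 0 0 j' j * x.1 j + A n 0 1 j' j * x.2 j),
   fun j' => ∑ j, (A n 1 0 j' j * x.1 j + A n 1 1 j' j * x.2 j))

/-- The composite of `k` successive block matrices, from level `n` to level `n + k`. -/
def blockPush (J : ℕ → ℕ) (A : ∀ n, Fin 2 → Fin 2 → Fin (J (n+1)) → Fin (J n) → ℤ) :
    (k n : ℕ) → ((Fin (J n) → ℤ) × (Fin (J n) → ℤ)) →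
      (Fin (J (n+k)) → ℤ) × (Fin (J (n+k)) → ℤ)
  | 0, _, x => x
  | k+1, n, x => blockStep J A (n+k) (blockPush J A k n x)

/-- `u` is an order unit for the cone `P`. -/
def IsOrderUnit {G : Type*} [AddCommGroup G] (P : Set G) (u : G) : Prop :=
  u ∈ P ∧ ∀ a : G, ∃ k : ℕ, 0 < k ∧ k • u - a ∈ P

/-- A state on `(G, P)` with respect to the order unit `u`. -/
def IsState {G : Type*} [AddCommGroup G] (P : Set G) (u : G) (τ : G →+ ℝ) : Prop :=
  (∀ a ∈ P, 0 ≤ τ a) ∧ τ u = 1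

/-- An extremal state: a state which is not a nontrivial convex combination of states. -/
def IsExtremalState {G : Type*} [AddCommGroup G] (P : Set G) (u : G) (τ : G →+ ℝ) : Prop :=
  IsState P u τ ∧ ∀ τ₁ τ₂ : G →+ ℝ, IsState P u τ₁ → IsState P u τ₂ →
    ∀ t : ℝ, 0 < t → t < 1 → (∀ g : G, τ g = t * τ₁ g + (1 - t) * τ₂ g) → τ₁ = τ₂

private lemma hom_eval {mm : ℕ} (F : ((Fin mm → ℤ) × (Fin mm → ℤ)) →+ ℝ)
    (x : (Fin mm → ℤ) × (Fin mm → ℤ)) :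
    F x = ∑ j, ((x.1 j : ℝ) * F (Pi.single j 1, 0) + (x.2 j : ℝ) * F (0, Pi.single j 1)) := by
  have hone : ∀ v : Fin mm → ℤ, ∑ j, v j • Pi.single j (1:ℤ) = v := by
    intro v
    funext i
    simp [Finset.sum_apply, Pi.single_apply, smul_eq_mul, mul_ite]
  have hx : x = ∑ j, (x.1 j • (Pi.single j 1, (0 : Fin mm → ℤ)) +
      x.2 j • ((0 : Fin mm → ℤ), Pi.single j 1)) := by
    have h1 := hone x.1
    have h2 := hone x.2
    ext i
    · simp only [Prod.fst_sum, Prod.fst_add, Prod.smul_fst, smul_zero, add_zero]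
      exact (congrFun h1 i).symm
    · simp only [Prod.snd_sum, Prod.snd_add, Prod.smul_snd, smul_zero, zero_add]
      exact (congrFun h2 i).symm
  calc F x = F (∑ j, (x.1 j • (Pi.single j 1, (0 : Fin mm → ℤ)) +
      x.2 j • ((0 : Fin mm → ℤ), Pi.single j 1))) := congrArg F hx
    _ = _ := by
        rw [map_sum]
        refine Finset.sum_congr rfl fun j _ => ?_
        rw [map_add, map_zsmul, map_zsmul, zsmul_eq_mul, zsmul_eq_mul]





private lemma contraction (rr ll eps p q : ℝ) (hrr1 : 1 < rr) (hrr : rr ≤ 129/128)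
    (hll : 4 ≤ ll) (heps : 0 ≤ eps) (hp : 0 ≤ p) (hq : 0 ≤ q)
    (i1 : ll*p ≤ ll*rr*eps + rr^2*q) (i2 : ll*q ≤ ll*rr*eps + rr^2*p) :
    p ≤ 2*eps ∧ q ≤ 2*eps := by
  have hrr0 : (0:ℝ) < rr := by linarith
  have hr2 : rr^2 ≤ 51/50 := by nlinarith only [hrr1, hrr]
  have hr4 : rr^4 ≤ 26/25 := by nlinarith only [hrr1, hrr, hr2, sq_nonneg (rr^2 - 1)]
  have hll2 : 16 ≤ ll^2 := by nlinarith only [hll]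
  have i3 := mul_le_mul_of_nonneg_left i1 (by linarith : (0:ℝ) ≤ ll)
  have i4 := mul_le_mul_of_nonneg_left i2 (sq_nonneg rr)
  constructor
  · nlinarith only [hrr1, hrr, hll, heps, hp, hq, hr2, hr4, hll2, i1, i2, i3, i4, mul_nonneg heps (by linarith : (0:ℝ) ≤ ll), mul_nonneg hp (by linarith : (0:ℝ) ≤ ll),
      mul_le_mul_of_nonneg_left hr4 hp, mul_le_mul_of_nonneg_left hr2 heps,
      mul_nonneg (mul_nonneg heps (by linarith : (0:ℝ) ≤ ll)) (by linarith : (0:ℝ) ≤ ll),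
      mul_le_mul_of_nonneg_right hll2 hp, mul_le_mul_of_nonneg_right hll2 heps]
  · have i3' := mul_le_mul_of_nonneg_left i2 (by linarith : (0:ℝ) ≤ ll)
    have i4' := mul_le_mul_of_nonneg_left i1 (sq_nonneg rr)
    nlinarith only [hrr1, hrr, hll, heps, hp, hq, hr2, hr4, hll2, i1, i2, i3', i4', mul_nonneg heps (by linarith : (0:ℝ) ≤ ll), mul_nonneg hq (by linarith : (0:ℝ) ≤ ll),
      mul_le_mul_of_nonneg_left hr4 hq, mul_le_mul_of_nonneg_left hr2 heps,
      mul_nonneg (mul_nonneg heps (by linarith : (0:ℝ) ≤ ll)) (by linarith : (0:ℝ) ≤ ll),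
      mul_le_mul_of_nonneg_right hll2 hq, mul_le_mul_of_nonneg_right hll2 heps]

set_option maxHeartbeats 3000000 in
private lemma step_est
    (Jn Jn1 : ℕ) (hJn : 0 < Jn) (hJn1 : 0 < Jn1)
    (rr ll K0 K1 : ℝ) (hrr1 : 1 < rr) (hrr : rr ≤ 129/128) (hll : 4 ≤ ll)
    (hK0 : 0 < K0) (hK1 : 0 < K1)
    (A00 A01 A10 A11 : Fin Jn1 → Fin Jn → ℝ)
    (hA00p : ∀ j' j, 0 < A00 j' j) (hA01p : ∀ j' j, 0 < A01 j' j)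
    (hA10p : ∀ j' j, 0 < A10 j' j) (hA11p : ∀ j' j, 0 < A11 j' j)
    (u00 u01 u10 u11 : Fin Jn → ℝ) (v00 v11 : Fin Jn1 → ℝ)
    (α β : Fin Jn1 → ℝ) (αn βn : Fin Jn → ℝ)
    (hrecα : ∀ j, αn j = ∑ j', (A00 j' j * α j' + A10 j' j * β j'))
    (hrecβ : ∀ j, βn j = ∑ j', (A01 j' j * α j' + A11 j' j * β j'))
    (hcon1 : ∑ j, (u00 j * αn j + u01 j * βn j) = 0)
    (hcon2 : ∑ j, (u10 j * αn j + u11 j * βn j) = 0)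
    (hu00 : ∀ j, K0 ≤ rr * u00 j ∧ u00 j ≤ rr * K0)
    (hu11 : ∀ j, K0 ≤ rr * u11 j ∧ u11 j ≤ rr * K0)
    (hu01 : ∀ j, K0 ≤ rr * (ll * (-u01 j)) ∧ ll * (-u01 j) ≤ rr * K0)
    (hu10 : ∀ j, K0 ≤ rr * (ll * (-u10 j)) ∧ ll * (-u10 j) ≤ rr * K0)
    (hA5a : ∀ j' j'' j, A00 j' j ≤ rr * (ll * A10 j'' j) ∧ ll * A10 j'' j ≤ rr * A00 j' j)
    (hA5b : ∀ j' j'' j, A11 j' j ≤ rr * (ll * A01 j'' j) ∧ ll * A01 j'' j ≤ rr * A11 j' j)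
    (hcomp00 : ∀ j', v00 j' = ∑ j, (A00 j' j * u00 j + A01 j' j * u01 j))
    (hcomp11 : ∀ j', v11 j' = ∑ j, (A10 j' j * u10 j + A11 j' j * u11 j))
    (hv00b : ∀ j', v00 j' ≤ rr * K1) (hv11b : ∀ j', v11 j' ≤ rr * K1) :
    K0 * ∑ j, (|αn j| + |βn j|) ≤ (1/2) * (K1 * ∑ j', (|α j'| + |β j'|)) := by
  have hll0 : (0:ℝ) < ll := lt_of_lt_of_le (by norm_num) hll
  have hrr0 : (0:ℝ) < rr := lt_trans one_pos hrr1
  set j0 : Fin Jn1 := ⟨0, hJn1⟩ with hj0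
  set a : Fin Jn → ℝ := fun j => A00 j0 j with ha
  set d : Fin Jn → ℝ := fun j => A11 j0 j with hd
  set S : ℝ := ∑ j', α j' with hS
  set T : ℝ := ∑ j', β j' with hT
  set m' : ℝ := ∑ j', (|α j'| + |β j'|) with hm'
  set X : ℝ := ll * S + T with hX
  set Y : ℝ := S + ll * T with hY
  set Sa : ℝ := ∑ j, a j with hSa
  set Sd : ℝ := ∑ j, d j with hSd
  have her0 : 0 < rr^2 - 1 := by nlinarith only [hrr1]
  have her' : rr^2 - 1 ≤ 257/16384 := by nlinarith only [hrr1, hrr]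
  have hap : ∀ j, 0 < a j := fun j => hA00p j0 j
  have hdp : ∀ j, 0 < d j := fun j => hA11p j0 j
  have hm'0 : 0 ≤ m' := Finset.sum_nonneg fun j _ => by positivity
  have hne : (Finset.univ : Finset (Fin Jn)).Nonempty :=
    Finset.univ_nonempty_iff.mpr (Fin.pos_iff_nonempty.mp hJn)
  have hSa0 : 0 < Sa := Finset.sum_pos (fun j _ => hap j) hne
  have hSd0 : 0 < Sd := Finset.sum_pos (fun j _ => hdp j) hne
  -- entry deviation bounds
  have F1 : ∀ j' j, |ll * A00 j' j - ll * a j| ≤ (rr^2 - 1) * (ll * a j) := by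
    intro j' j
    have h1 : A00 j' j ≤ rr * (ll * A10 j0 j) := (hA5a j' j0 j).1
    have h2 : ll * A10 j0 j ≤ rr * a j := (hA5a j0 j0 j).2
    have h3 : a j ≤ rr * (ll * A10 j0 j) := (hA5a j0 j0 j).1
    have h4 : ll * A10 j0 j ≤ rr * A00 j' j := (hA5a j' j0 j).2
    rw [abs_le]
    constructor <;>
      nlinarith only [hrr1, hrr, hrr0, hll, hll0, hK0, hK1, h1, h2, h3, h4, her0, hap j, hA00p j' j, hA10p j0 j, sq_nonneg (rr^2 - 1),
        mul_le_mul_of_nonneg_left h2 (le_of_lt hrr0),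
        mul_le_mul_of_nonneg_left h4 (le_of_lt hrr0),
        mul_le_mul_of_nonneg_left h1 (le_of_lt hll0),
        mul_le_mul_of_nonneg_left h3 (le_of_lt hll0),
        mul_le_mul_of_nonneg_left (mul_le_mul_of_nonneg_left h4 (le_of_lt hrr0)) (le_of_lt hll0),
        mul_le_mul_of_nonneg_left (mul_le_mul_of_nonneg_left h2 (le_of_lt hrr0)) (le_of_lt hll0),
        mul_pos hll0 (hap j)]
  have F2 : ∀ j' j, |ll * A10 j' j - a j| ≤ (rr^2 - 1) * a j := by
    intro j' j
    have h1 : a j ≤ rr * (ll * A10 j' j) := (hA5a j0 j' j).1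
    have h2 : ll * A10 j' j ≤ rr * a j := (hA5a j0 j' j).2
    rw [abs_le]
    constructor <;>
      nlinarith only [hrr1, hrr, hrr0, hll, hll0, hK0, hK1, h1, h2, her0, hap j, hA10p j' j, sq_nonneg (rr - 1), mul_pos hll0 (hA10p j' j),
        mul_le_mul_of_nonneg_left h2 (le_of_lt hrr0)]
  have F3 : ∀ j' j, |ll * A11 j' j - ll * d j| ≤ (rr^2 - 1) * (ll * d j) := by
    intro j' j
    have h1 : A11 j' j ≤ rr * (ll * A01 j0 j) := (hA5b j' j0 j).1
    have h2 : ll * A01 j0 j ≤ rr * d j := (hA5b j0 j0 j).2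
    have h3 : d j ≤ rr * (ll * A01 j0 j) := (hA5b j0 j0 j).1
    have h4 : ll * A01 j0 j ≤ rr * A11 j' j := (hA5b j' j0 j).2
    rw [abs_le]
    constructor <;>
      nlinarith only [hrr1, hrr, hrr0, hll, hll0, hK0, hK1, h1, h2, h3, h4, her0, hdp j, hA11p j' j, hA01p j0 j, sq_nonneg (rr^2 - 1),
        mul_le_mul_of_nonneg_left h2 (le_of_lt hrr0),
        mul_le_mul_of_nonneg_left h4 (le_of_lt hrr0),
        mul_le_mul_of_nonneg_left h1 (le_of_lt hll0),
        mul_le_mul_of_nonneg_left h3 (le_of_lt hll0),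
        mul_le_mul_of_nonneg_left (mul_le_mul_of_nonneg_left h4 (le_of_lt hrr0)) (le_of_lt hll0),
        mul_le_mul_of_nonneg_left (mul_le_mul_of_nonneg_left h2 (le_of_lt hrr0)) (le_of_lt hll0),
        mul_pos hll0 (hdp j)]
  have F4 : ∀ j' j, |ll * A01 j' j - d j| ≤ (rr^2 - 1) * d j := by
    intro j' j
    have h1 : d j ≤ rr * (ll * A01 j' j) := (hA5b j0 j' j).1
    have h2 : ll * A01 j' j ≤ rr * d j := (hA5b j0 j' j).2
    rw [abs_le]
    constructor <;>
      nlinarith only [hrr1, hrr, hrr0, hll, hll0, hK0, hK1, h1, h2, her0, hdp j, hA01p j' j, sq_nonneg (rr - 1), mul_pos hll0 (hA01p j' j),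
        mul_le_mul_of_nonneg_left h2 (le_of_lt hrr0)]
  -- main deviation of αn, βn from the rank-one approximation
  have E1 : ∀ j, |ll * αn j - a j * X| ≤ (rr^2 - 1) * ll * (a j * m') := by
    intro j
    have hdiff : ll * αn j - a j * X
        = ∑ j', ((ll * A00 j' j - ll * a j) * α j' + (ll * A10 j' j - a j) * β j') := by
      rw [hrecα j, hX, hS, hT, Finset.mul_sum, mul_add, Finset.mul_sum, Finset.mul_sum,
        Finset.mul_sum, ← Finset.sum_add_distrib, ← Finset.sum_sub_distrib]
      exact Finset.sum_congr rfl fun j' _ => by ring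
    rw [hdiff]
    calc |∑ j', ((ll * A00 j' j - ll * a j) * α j' + (ll * A10 j' j - a j) * β j')|
        ≤ ∑ j', |(ll * A00 j' j - ll * a j) * α j' + (ll * A10 j' j - a j) * β j'| :=
          Finset.abs_sum_le_sum_abs _ _
      _ ≤ ∑ j', ((rr^2 - 1) * (ll * a j) * |α j'| + (rr^2 - 1) * (ll * a j) * |β j'|) := by
          refine Finset.sum_le_sum fun j' _ => ?_
          have t1 : |(ll * A00 j' j - ll * a j) * α j'| ≤ (rr^2 - 1) * (ll * a j) * |α j'| := by
            rw [abs_mul]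
            exact mul_le_mul_of_nonneg_right (F1 j' j) (abs_nonneg _)
          have t2 : |(ll * A10 j' j - a j) * β j'| ≤ (rr^2 - 1) * (ll * a j) * |β j'| := by
            rw [abs_mul]
            refine mul_le_mul_of_nonneg_right (le_trans (F2 j' j) ?_) (abs_nonneg _)
            nlinarith only [hrr1, hrr, hrr0, hll, hll0, hK0, hK1, hap j, her0, hll, mul_pos her0 (hap j)]
          calc |(ll * A00 j' j - ll * a j) * α j' + (ll * A10 j' j - a j) * β j'|
              ≤ |(ll * A00 j' j - ll * a j) * α j'| + |(ll * A10 j' j - a j) * β j'| :=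
                abs_add_le _ _
            _ ≤ _ := add_le_add t1 t2
      _ = (rr^2 - 1) * ll * (a j * m') := by
          simp only [hm', Finset.mul_sum]
          exact Finset.sum_congr rfl fun j' _ => by ring
  have E2 : ∀ j, |ll * βn j - d j * Y| ≤ (rr^2 - 1) * ll * (d j * m') := by
    intro j
    have hdiff : ll * βn j - d j * Y
        = ∑ j', ((ll * A01 j' j - d j) * α j' + (ll * A11 j' j - ll * d j) * β j') := by
      rw [hrecβ j, hY, hS, hT, Finset.mul_sum, mul_add, Finset.mul_sum, Finset.mul_sum,
        Finset.mul_sum, ← Finset.sum_add_distrib, ← Finset.sum_sub_distrib]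
      exact Finset.sum_congr rfl fun j' _ => by ring
    rw [hdiff]
    calc |∑ j', ((ll * A01 j' j - d j) * α j' + (ll * A11 j' j - ll * d j) * β j')|
        ≤ ∑ j', |(ll * A01 j' j - d j) * α j' + (ll * A11 j' j - ll * d j) * β j'| :=
          Finset.abs_sum_le_sum_abs _ _
      _ ≤ ∑ j', ((rr^2 - 1) * (ll * d j) * |α j'| + (rr^2 - 1) * (ll * d j) * |β j'|) := by
          refine Finset.sum_le_sum fun j' _ => ?_
          have t1 : |(ll * A01 j' j - d j) * α j'| ≤ (rr^2 - 1) * (ll * d j) * |α j'| := by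
            rw [abs_mul]
            refine mul_le_mul_of_nonneg_right (le_trans (F4 j' j) ?_) (abs_nonneg _)
            nlinarith only [hrr1, hrr, hrr0, hll, hll0, hK0, hK1, hdp j, her0, hll, mul_pos her0 (hdp j)]
          have t2 : |(ll * A11 j' j - ll * d j) * β j'| ≤ (rr^2 - 1) * (ll * d j) * |β j'| := by
            rw [abs_mul]
            exact mul_le_mul_of_nonneg_right (F3 j' j) (abs_nonneg _)
          calc |(ll * A01 j' j - d j) * α j' + (ll * A11 j' j - ll * d j) * β j'|
              ≤ |(ll * A01 j' j - d j) * α j'| + |(ll * A11 j' j - ll * d j) * β j'| :=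
                abs_add_le _ _
            _ ≤ _ := add_le_add t1 t2
      _ = (rr^2 - 1) * ll * (d j * m') := by
          simp only [hm', Finset.mul_sum]
          exact Finset.sum_congr rfl fun j' _ => by ring
  -- basic sign facts for u
  have hu00p : ∀ j, 0 < u00 j := fun j => by nlinarith only [hrr1, hrr, hrr0, hll, hll0, hK0, hK1, (hu00 j).1]
  have hu11p : ∀ j, 0 < u11 j := fun j => by nlinarith only [hrr1, hrr, hrr0, hll, hll0, hK0, hK1, (hu11 j).1]
  have hu01n : ∀ j, 0 < -u01 j := fun j => by nlinarith only [hrr1, hrr, hrr0, hll, hll0, hK0, hK1, (hu01 j).1, mul_pos hrr0 hll0]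
  have hu10n : ∀ j, 0 < -u10 j := fun j => by nlinarith only [hrr1, hrr, hrr0, hll, hll0, hK0, hK1, (hu10 j).1, mul_pos hrr0 hll0]
  have hu00b : ∀ j, |u00 j| ≤ rr * K0 := fun j => by
    rw [abs_of_pos (hu00p j)]; exact (hu00 j).2
  have hu11b : ∀ j, |u11 j| ≤ rr * K0 := fun j => by
    rw [abs_of_pos (hu11p j)]; exact (hu11 j).2
  have hu01b : ∀ j, |u01 j| ≤ rr * K0 := fun j => by
    rw [abs_of_neg (by linarith [hu01n j] : u01 j < 0)]
    nlinarith only [hrr1, hrr, hrr0, hll, hll0, hK0, hK1, (hu01 j).2, hu01n j]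
  have hu10b : ∀ j, |u10 j| ≤ rr * K0 := fun j => by
    rw [abs_of_neg (by linarith [hu10n j] : u10 j < 0)]
    nlinarith only [hrr1, hrr, hrr0, hll, hll0, hK0, hK1, (hu10 j).2, hu10n j]
  -- the constraint inequalities
  have C1 : |(∑ j, u00 j * a j) * X - (∑ j, (-u01 j) * d j) * Y|
      ≤ (rr^2-1) * ll * m' * (rr * K0 * (Sa + Sd)) := by
    have hkey : (∑ j, u00 j * a j) * X - (∑ j, (-u01 j) * d j) * Y
        = ∑ j, (u00 j * (a j * X - ll * αn j) + u01 j * (d j * Y - ll * βn j)) := by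
      calc (∑ j, u00 j * a j) * X - (∑ j, (-u01 j) * d j) * Y
          = (∑ j, u00 j * a j) * X - (∑ j, (-u01 j) * d j) * Y
            - ll * ∑ j, (u00 j * αn j + u01 j * βn j) := by rw [hcon1]; ring
        _ = ∑ j, (u00 j * (a j * X - ll * αn j) + u01 j * (d j * Y - ll * βn j)) := by
            rw [Finset.sum_mul, Finset.sum_mul, Finset.mul_sum, ← Finset.sum_sub_distrib,
              ← Finset.sum_sub_distrib]
            exact Finset.sum_congr rfl fun j _ => by ring
    rw [hkey]
    calc |∑ j, (u00 j * (a j * X - ll * αn j) + u01 j * (d j * Y - ll * βn j))|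
        ≤ ∑ j, |u00 j * (a j * X - ll * αn j) + u01 j * (d j * Y - ll * βn j)| :=
          Finset.abs_sum_le_sum_abs _ _
      _ ≤ ∑ j, ((rr*K0) * ((rr^2-1) * ll * (a j * m')) + (rr*K0) * ((rr^2-1) * ll * (d j * m'))) := by
          refine Finset.sum_le_sum fun j _ => ?_
          have t1 : |u00 j * (a j * X - ll * αn j)| ≤ (rr*K0) * ((rr^2-1) * ll * (a j * m')) := by
            rw [abs_mul]
            refine mul_le_mul (hu00b j) ?_ (abs_nonneg _) (by positivity)
            rw [abs_sub_comm]; exact E1 j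
          have t2 : |u01 j * (d j * Y - ll * βn j)| ≤ (rr*K0) * ((rr^2-1) * ll * (d j * m')) := by
            rw [abs_mul]
            refine mul_le_mul (hu01b j) ?_ (abs_nonneg _) (by positivity)
            rw [abs_sub_comm]; exact E2 j
          exact le_trans (abs_add_le _ _) (add_le_add t1 t2)
      _ = (rr^2-1) * ll * m' * (rr * K0 * (Sa + Sd)) := by
          simp only [hSa, hSd, mul_add, Finset.mul_sum, ← Finset.sum_add_distrib]
          exact Finset.sum_congr rfl fun j _ => by ring
  have C2 : |(∑ j, u11 j * d j) * Y - (∑ j, (-u10 j) * a j) * X|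
      ≤ (rr^2-1) * ll * m' * (rr * K0 * (Sa + Sd)) := by
    have hkey : (∑ j, u11 j * d j) * Y - (∑ j, (-u10 j) * a j) * X
        = ∑ j, (u10 j * (a j * X - ll * αn j) + u11 j * (d j * Y - ll * βn j)) := by
      calc (∑ j, u11 j * d j) * Y - (∑ j, (-u10 j) * a j) * X
          = (∑ j, u11 j * d j) * Y - (∑ j, (-u10 j) * a j) * X
            - ll * ∑ j, (u10 j * αn j + u11 j * βn j) := by rw [hcon2]; ring
        _ = ∑ j, (u10 j * (a j * X - ll * αn j) + u11 j * (d j * Y - ll * βn j)) := by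
            rw [Finset.sum_mul, Finset.sum_mul, Finset.mul_sum, ← Finset.sum_sub_distrib,
              ← Finset.sum_sub_distrib]
            exact Finset.sum_congr rfl fun j _ => by ring
    rw [hkey]
    calc |∑ j, (u10 j * (a j * X - ll * αn j) + u11 j * (d j * Y - ll * βn j))|
        ≤ ∑ j, |u10 j * (a j * X - ll * αn j) + u11 j * (d j * Y - ll * βn j)| :=
          Finset.abs_sum_le_sum_abs _ _
      _ ≤ ∑ j, ((rr*K0) * ((rr^2-1) * ll * (a j * m')) + (rr*K0) * ((rr^2-1) * ll * (d j * m'))) := by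
          refine Finset.sum_le_sum fun j _ => ?_
          have t1 : |u10 j * (a j * X - ll * αn j)| ≤ (rr*K0) * ((rr^2-1) * ll * (a j * m')) := by
            rw [abs_mul]
            refine mul_le_mul (hu10b j) ?_ (abs_nonneg _) (by positivity)
            rw [abs_sub_comm]; exact E1 j
          have t2 : |u11 j * (d j * Y - ll * βn j)| ≤ (rr*K0) * ((rr^2-1) * ll * (d j * m')) := by
            rw [abs_mul]
            refine mul_le_mul (hu11b j) ?_ (abs_nonneg _) (by positivity)
            rw [abs_sub_comm]; exact E2 j
          exact le_trans (abs_add_le _ _) (add_le_add t1 t2)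
      _ = (rr^2-1) * ll * m' * (rr * K0 * (Sa + Sd)) := by
          simp only [hSa, hSd, mul_add, Finset.mul_sum, ← Finset.sum_add_distrib]
          exact Finset.sum_congr rfl fun j _ => by ring
  -- coefficient bounds
  have hCa : K0 * Sa ≤ rr * ∑ j, u00 j * a j := by
    rw [hSa, Finset.mul_sum, Finset.mul_sum]
    exact Finset.sum_le_sum fun j _ => by nlinarith only [hrr1, hrr, hrr0, hll, hll0, hK0, hK1, (hu00 j).1, hap j]
  have hCd : K0 * Sd ≤ rr * ∑ j, u11 j * d j := by
    rw [hSd, Finset.mul_sum, Finset.mul_sum]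
    exact Finset.sum_le_sum fun j _ => by nlinarith only [hrr1, hrr, hrr0, hll, hll0, hK0, hK1, (hu11 j).1, hdp j]
  have hCb : ll * ∑ j, (-u01 j) * d j ≤ rr * K0 * Sd := by
    rw [hSd, Finset.mul_sum, Finset.mul_sum]
    exact Finset.sum_le_sum fun j _ => by nlinarith only [hrr1, hrr, hrr0, hll, hll0, hK0, hK1, (hu01 j).2, hdp j]
  have hCc : ll * ∑ j, (-u10 j) * a j ≤ rr * K0 * Sa := by
    rw [hSa, Finset.mul_sum, Finset.mul_sum]
    exact Finset.sum_le_sum fun j _ => by nlinarith only [hrr1, hrr, hrr0, hll, hll0, hK0, hK1, (hu10 j).2, hap j]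
  have hCb0 : 0 ≤ ∑ j, (-u01 j) * d j :=
    Finset.sum_nonneg fun j _ => le_of_lt (mul_pos (hu01n j) (hdp j))
  have hCc0 : 0 ≤ ∑ j, (-u10 j) * a j :=
    Finset.sum_nonneg fun j _ => le_of_lt (mul_pos (hu10n j) (hap j))
  have hCapos : 0 < ∑ j, u00 j * a j :=
    Finset.sum_pos (fun j _ => mul_pos (hu00p j) (hap j)) hne
  have hCdpos : 0 < ∑ j, u11 j * d j :=
    Finset.sum_pos (fun j _ => mul_pos (hu11p j) (hdp j)) hne
  have heps0 : 0 ≤ (rr^2-1) * ll * m' * (rr * K0 * (Sa + Sd)) := by positivity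
  -- derive i1, i2 of the contraction lemma
  have habs1 : |(∑ j, u00 j * a j) * X| ≤ (rr^2-1) * ll * m' * (rr * K0 * (Sa + Sd))
      + (∑ j, (-u01 j) * d j) * |Y| := by
    calc |(∑ j, u00 j * a j) * X|
        = |((∑ j, u00 j * a j) * X - (∑ j, (-u01 j) * d j) * Y) + (∑ j, (-u01 j) * d j) * Y| := by
          congr 1; ring
      _ ≤ |(∑ j, u00 j * a j) * X - (∑ j, (-u01 j) * d j) * Y| + |(∑ j, (-u01 j) * d j) * Y| :=
          abs_add_le _ _
      _ ≤ _ := by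
          rw [abs_mul, abs_of_nonneg hCb0]
          exact add_le_add_left C1 _
  have habs2 : |(∑ j, u11 j * d j) * Y| ≤ (rr^2-1) * ll * m' * (rr * K0 * (Sa + Sd))
      + (∑ j, (-u10 j) * a j) * |X| := by
    calc |(∑ j, u11 j * d j) * Y|
        = |((∑ j, u11 j * d j) * Y - (∑ j, (-u10 j) * a j) * X) + (∑ j, (-u10 j) * a j) * X| := by
          congr 1; ring
      _ ≤ |(∑ j, u11 j * d j) * Y - (∑ j, (-u10 j) * a j) * X| + |(∑ j, (-u10 j) * a j) * X| :=
          abs_add_le _ _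
      _ ≤ _ := by
          rw [abs_mul, abs_of_nonneg hCc0]
          exact add_le_add_left C2 _
  have i1 : ll * (K0 * Sa * |X|) ≤ ll * rr * ((rr^2-1) * ll * m' * (rr * K0 * (Sa + Sd)))
      + rr^2 * (K0 * Sd * |Y|) := by
    have h1 : K0 * Sa * |X| ≤ rr * |(∑ j, u00 j * a j) * X| := by
      rw [abs_mul, abs_of_pos hCapos]
      nlinarith only [hrr1, hrr, hrr0, hll, hll0, hK0, hK1, hCa, abs_nonneg X, mul_le_mul_of_nonneg_right hCa (abs_nonneg X)]
    have h2 : ll * ((∑ j, (-u01 j) * d j) * |Y|) ≤ rr * K0 * Sd * |Y| := by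
      nlinarith only [hrr1, hrr, hrr0, hll, hll0, hK0, hK1, mul_le_mul_of_nonneg_right hCb (abs_nonneg Y)]
    nlinarith only [hrr1, hrr, hrr0, hll, hll0, hK0, hK1, mul_le_mul_of_nonneg_right habs1 (by linarith : (0:ℝ) ≤ ll),
      mul_le_mul_of_nonneg_left h1 (by linarith : (0:ℝ) ≤ ll),
      mul_le_mul_of_nonneg_left h2 (le_of_lt hrr0)]
  have i2 : ll * (K0 * Sd * |Y|) ≤ ll * rr * ((rr^2-1) * ll * m' * (rr * K0 * (Sa + Sd)))
      + rr^2 * (K0 * Sa * |X|) := by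
    have h1 : K0 * Sd * |Y| ≤ rr * |(∑ j, u11 j * d j) * Y| := by
      rw [abs_mul, abs_of_pos hCdpos]
      nlinarith only [hrr1, hrr, hrr0, hll, hll0, hK0, hK1, hCd, abs_nonneg Y, mul_le_mul_of_nonneg_right hCd (abs_nonneg Y)]
    have h2 : ll * ((∑ j, (-u10 j) * a j) * |X|) ≤ rr * K0 * Sa * |X| := by
      nlinarith only [hrr1, hrr, hrr0, hll, hll0, hK0, hK1, mul_le_mul_of_nonneg_right hCc (abs_nonneg X)]
    nlinarith only [hrr1, hrr, hrr0, hll, hll0, hK0, hK1, mul_le_mul_of_nonneg_right habs2 (by linarith : (0:ℝ) ≤ ll),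
      mul_le_mul_of_nonneg_left h1 (by linarith : (0:ℝ) ≤ ll),
      mul_le_mul_of_nonneg_left h2 (le_of_lt hrr0)]
  obtain ⟨hXb, hYb⟩ := contraction rr ll ((rr^2-1) * ll * m' * (rr * K0 * (Sa + Sd)))
    (K0 * Sa * |X|) (K0 * Sd * |Y|) hrr1 hrr hll heps0 (mul_nonneg (mul_nonneg hK0.le hSa0.le) (abs_nonneg X)) (mul_nonneg (mul_nonneg hK0.le hSd0.le) (abs_nonneg Y)) i1 i2
  -- comparability of K0*(Sa+Sd) with K1
  have h00 : ll^2 * (K0 * Sa) ≤ rr^2 * ll^2 * K1 + rr^3 * (K0 * Sd) := by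
    have hlow : ∑ j, (ll^2 * (K0 * a j) - rr^3 * (K0 * d j))
        ≤ ∑ j, (rr * ll^2 * (A00 j0 j * u00 j + A01 j0 j * u01 j)) := by
      refine Finset.sum_le_sum fun j _ => ?_
      have e1 : K0 * a j ≤ rr * (a j * u00 j) := by nlinarith only [hrr1, hrr, hrr0, hll, hll0, hK0, hK1, (hu00 j).1, hap j]
      have e2 : (ll * A01 j0 j) * (ll * (-u01 j)) ≤ (rr * d j) * (rr * K0) :=
        mul_le_mul (hA5b j0 j0 j).2 (hu01 j).2 (mul_nonneg hll0.le (hu01n j).le)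
          (mul_nonneg hrr0.le (hdp j).le)
      have ha' : a j = A00 j0 j := rfl
      have hd' : d j = A11 j0 j := rfl
      nlinarith only [hrr1, hrr, hrr0, hll, hll0, hK0, hK1, mul_le_mul_of_nonneg_left e1 (sq_nonneg ll), mul_le_mul_of_nonneg_left e2 (le_of_lt hrr0)]
    have hsum : ∑ j, (rr * ll^2 * (A00 j0 j * u00 j + A01 j0 j * u01 j))
        = rr * ll^2 * v00 j0 := by
      rw [hcomp00 j0, Finset.mul_sum]
    have hlhs : ∑ j, (ll^2 * (K0 * a j) - rr^3 * (K0 * d j))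
        = ll^2 * (K0 * Sa) - rr^3 * (K0 * Sd) := by
      rw [hSa, hSd, Finset.sum_sub_distrib, Finset.mul_sum, Finset.mul_sum,
        Finset.mul_sum, Finset.mul_sum]
    nlinarith only [hlow, hsum, hlhs, mul_le_mul_of_nonneg_left (hv00b j0)
      (by positivity : (0:ℝ) ≤ rr * ll^2)]
  have h11' : ll^2 * (K0 * Sd) ≤ rr^2 * ll^2 * K1 + rr^3 * (K0 * Sa) := by
    have hlow : ∑ j, (ll^2 * (K0 * d j) - rr^3 * (K0 * a j))
        ≤ ∑ j, (rr * ll^2 * (A10 j0 j * u10 j + A11 j0 j * u11 j)) := by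
      refine Finset.sum_le_sum fun j _ => ?_
      have e1 : K0 * d j ≤ rr * (d j * u11 j) := by nlinarith only [hrr1, hrr, hrr0, hll, hll0, hK0, hK1, (hu11 j).1, hdp j]
      have e2 : (ll * A10 j0 j) * (ll * (-u10 j)) ≤ (rr * a j) * (rr * K0) :=
        mul_le_mul (hA5a j0 j0 j).2 (hu10 j).2 (mul_nonneg hll0.le (hu10n j).le)
          (mul_nonneg hrr0.le (hap j).le)
      nlinarith only [hrr1, hrr, hrr0, hll, hll0, hK0, hK1, mul_le_mul_of_nonneg_left e1 (sq_nonneg ll), mul_le_mul_of_nonneg_left e2 (le_of_lt hrr0)]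
    have hsum : ∑ j, (rr * ll^2 * (A10 j0 j * u10 j + A11 j0 j * u11 j))
        = rr * ll^2 * v11 j0 := by
      rw [hcomp11 j0, Finset.mul_sum]
    have hlhs : ∑ j, (ll^2 * (K0 * d j) - rr^3 * (K0 * a j))
        = ll^2 * (K0 * Sd) - rr^3 * (K0 * Sa) := by
      rw [hSa, hSd, Finset.sum_sub_distrib, Finset.mul_sum, Finset.mul_sum,
        Finset.mul_sum, Finset.mul_sum]
    nlinarith only [hlow, hsum, hlhs, mul_le_mul_of_nonneg_left (hv11b j0)
      (by positivity : (0:ℝ) ≤ rr * ll^2)]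
  have hr2 : rr^2 ≤ 51/50 := by nlinarith only [hrr1, hrr, hll]
  have hr3 : rr^3 ≤ 26/25 := by nlinarith only [hrr1, hrr, hr2, mul_le_mul_of_nonneg_left hrr (sq_nonneg rr)]
  have hll2 : 16 ≤ ll^2 := by nlinarith only [hrr1, hrr, hll]
  have hcmp : K0 * (Sa + Sd) ≤ 3 * K1 := by
    nlinarith only [hrr1, hrr, hrr0, hll, hll0, hK0, hK1, h00, h11', mul_pos hK0 hSa0, mul_pos hK0 hSd0, hK1,
      mul_le_mul_of_nonneg_right hr3 (le_of_lt (mul_pos hK0 (by linarith : 0 < Sa + Sd))),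
      mul_le_mul_of_nonneg_right hr2 (le_of_lt hK1),
      mul_le_mul_of_nonneg_right hll2 (le_of_lt hK1)]
  -- assemble
  have hA1 : ∑ j, (ll * |αn j|) ≤ Sa * |X| + (rr^2-1) * ll * m' * Sa := by
    have : ∀ j, ll * |αn j| ≤ a j * |X| + (rr^2-1) * ll * (a j * m') := by
      intro j
      have h1 : |ll * αn j| ≤ |a j * X| + (rr^2-1) * ll * (a j * m') := by
        calc |ll * αn j| = |(ll * αn j - a j * X) + a j * X| := by ring_nf
          _ ≤ |ll * αn j - a j * X| + |a j * X| := abs_add_le _ _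
          _ ≤ _ := by rw [add_comm]; exact add_le_add_right (E1 j) _
      rw [abs_mul, abs_of_pos hll0, abs_mul, abs_of_pos (hap j)] at h1
      linarith
    calc ∑ j, (ll * |αn j|) ≤ ∑ j, (a j * |X| + (rr^2-1) * ll * (a j * m')) :=
        Finset.sum_le_sum fun j _ => this j
      _ = Sa * |X| + (rr^2-1) * ll * m' * Sa := by
          rw [Finset.sum_add_distrib, hSa, Finset.sum_mul, Finset.mul_sum]
          congr 1
          exact Finset.sum_congr rfl fun j _ => by ring
  have hB1 : ∑ j, (ll * |βn j|) ≤ Sd * |Y| + (rr^2-1) * ll * m' * Sd := by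
    have : ∀ j, ll * |βn j| ≤ d j * |Y| + (rr^2-1) * ll * (d j * m') := by
      intro j
      have h1 : |ll * βn j| ≤ |d j * Y| + (rr^2-1) * ll * (d j * m') := by
        calc |ll * βn j| = |(ll * βn j - d j * Y) + d j * Y| := by ring_nf
          _ ≤ |ll * βn j - d j * Y| + |d j * Y| := abs_add_le _ _
          _ ≤ _ := by rw [add_comm]; exact add_le_add_right (E2 j) _
      rw [abs_mul, abs_of_pos hll0, abs_mul, abs_of_pos (hdp j)] at h1
      linarith
    calc ∑ j, (ll * |βn j|) ≤ ∑ j, (d j * |Y| + (rr^2-1) * ll * (d j * m')) :=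
        Finset.sum_le_sum fun j _ => this j
      _ = Sd * |Y| + (rr^2-1) * ll * m' * Sd := by
          rw [Finset.sum_add_distrib, hSd, Finset.sum_mul, Finset.mul_sum]
          congr 1
          exact Finset.sum_congr rfl fun j _ => by ring
  have hmain : ll * (K0 * ∑ j, (|αn j| + |βn j|))
      ≤ ll * ((1/2) * (K1 * m')) := by
    have hsplit : ll * (K0 * ∑ j, (|αn j| + |βn j|))
        = K0 * ∑ j, (ll * |αn j|) + K0 * ∑ j, (ll * |βn j|) := by
      simp only [Finset.mul_sum, ← Finset.sum_add_distrib]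
      exact Finset.sum_congr rfl fun j _ => by ring
    rw [hsplit]
    have t1 : K0 * ∑ j, (ll * |αn j|) ≤ K0 * Sa * |X| + (rr^2-1) * ll * m' * (K0 * Sa) := by
      nlinarith only [hrr1, hrr, hrr0, hll, hll0, hK0, hK1, mul_le_mul_of_nonneg_left hA1 (le_of_lt hK0)]
    have t2 : K0 * ∑ j, (ll * |βn j|) ≤ K0 * Sd * |Y| + (rr^2-1) * ll * m' * (K0 * Sd) := by
      nlinarith only [hrr1, hrr, hrr0, hll, hll0, hK0, hK1, mul_le_mul_of_nonneg_left hB1 (le_of_lt hK0)]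
    have hfour : K0 * ∑ j, (ll * |αn j|) + K0 * ∑ j, (ll * |βn j|)
        ≤ (4*rr + 1) * ((rr^2-1) * ll * m' * (K0 * (Sa + Sd))) := by
      nlinarith only [hrr1, hrr, hrr0, hll, hll0, hK0, hK1, hXb, hYb, t1, t2]
    have hbig : (4*rr + 1) * ((rr^2-1) * ll * m' * (K0 * (Sa + Sd)))
        ≤ 6 * ((rr^2-1) * ll * m' * (3 * K1)) := by
      have hpos1 : 0 ≤ (rr^2-1) * ll * m' := by positivity
      have e1 : (rr^2-1) * ll * m' * (K0 * (Sa + Sd)) ≤ (rr^2-1) * ll * m' * (3 * K1) :=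
        mul_le_mul_of_nonneg_left hcmp hpos1
      nlinarith only [hrr1, hrr, hrr0, hll, hll0, hK0, hK1, e1, mul_nonneg hpos1 (by linarith : (0:ℝ) ≤ 3 * K1), hrr1, hrr]
    have hfin : 6 * ((rr^2-1) * ll * m' * (3 * K1)) ≤ ll * ((1/2) * (K1 * m')) := by
      nlinarith only [hrr1, hrr, hrr0, hll, hll0, hK0, hK1, her', mul_nonneg (mul_nonneg (le_of_lt hK1) hm'0) (le_of_lt hll0),
        mul_nonneg (le_of_lt hK1) hm'0]
    linarith
  exact le_of_mul_le_mul_left (by linarith [hmain] : ll * (K0 * ∑ j, (|αn j| + |βn j|)) ≤ ll * ((1/2) * (K1 * ∑ j', (|α j'| + |β j'|)))) hll0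

set_option maxHeartbeats 2000000 in
/-- Lemma 2.3: every state is the corresponding convex combination of
`σ₁` and `σ₂`, and these are the only extremal states. -/
theorem stmt14
    (J : ℕ → ℕ) (hJ : ∀ n, 0 < J n)
    (u : ∀ n, Fin 2 → Fin 2 → Fin (J n) → ℤ)
    (A : ∀ n, Fin 2 → Fin 2 → Fin (J (n+1)) → Fin (J n) → ℤ)
    (hA : ∀ n (p q : Fin 2) j' j, 0 < A n p q j' j)
    (hcompat : ∀ n (i p : Fin 2) (j' : Fin (J (n+1))),
      u (n+1) i p j' = ∑ j, (A n p 0 j' j * u n i 0 j + A n p 1 j' j * u n i 1 j))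
    (r : ℕ → ℚ) (hr1 : ∀ n, 1 < r n) (hr2 : ∀ n, r n < 2)
    (hrmono : ∀ n, r (n+1) ≤ r n)
    (hrlim : Filter.Tendsto r Filter.atTop (nhds 1))
    (K l : ℕ → ℕ) (hK : StrictMono K) (hl : StrictMono l)
    (hK4 : ∀ n, 4 ≤ K n) (hl4 : ∀ n, 4 ≤ l n)
    (hcond4 : ∀ n (j : Fin (J n)),
      ((r n)⁻¹ * K n ≤ (u n 0 0 j : ℚ) ∧ (u n 0 0 j : ℚ) ≤ r n * K n) ∧
      ((r n)⁻¹ * K n ≤ (u n 1 1 j : ℚ) ∧ (u n 1 1 j : ℚ) ≤ r n * K n) ∧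
      (-(r n * K n) ≤ (l n : ℚ) * u n 0 1 j ∧ (l n : ℚ) * u n 0 1 j ≤ -((r n)⁻¹ * K n)) ∧
      (-(r n * K n) ≤ (l n : ℚ) * u n 1 0 j ∧ (l n : ℚ) * u n 1 0 j ≤ -((r n)⁻¹ * K n)))
    (hcond5 : ∀ n (j' j'' : Fin (J (n+1))) (j : Fin (J n)),
      ((r n)⁻¹ * A n 0 0 j' j ≤ (l n : ℚ) * A n 1 0 j'' j ∧
        (l n : ℚ) * A n 1 0 j'' j ≤ r n * A n 0 0 j' j) ∧
      ((r n)⁻¹ * A n 1 1 j' j ≤ (l n : ℚ) * A n 0 1 j'' j ∧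
        (l n : ℚ) * A n 0 1 j'' j ≤ r n * A n 1 1 j' j))
    {G : Type*} [AddCommGroup G]
    (η : ∀ n, ((Fin (J n) → ℤ) × (Fin (J n) → ℤ)) →+ G)
    (hηcompat : ∀ n x, η n x = η (n+1) (blockStep J A n x))
    (hsurj : ∀ g : G, ∃ n x, η n x = g)
    (hker : ∀ n x, η n x = 0 → ∃ k, blockPush J A k n x = 0)
    (P : Set G)
    (hP : P = {g : G | ∃ n x, (∀ j, 0 ≤ x.1 j ∧ 0 ≤ x.2 j) ∧ η n x = g})
    (U1 U2 : G)
    (hU1 : ∀ n, η n (u n 0 0, u n 0 1) = U1)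
    (hU2 : ∀ n, η n (u n 1 0, u n 1 1) = U2)
    (σ₁ σ₂ : G →+ ℝ)
    (hσ₁ : IsState P (U1 + U2) σ₁) (hσ₂ : IsState P (U1 + U2) σ₂)
    (h11 : σ₁ U1 = 1) (h22 : σ₂ U2 = 1) (h12 : σ₁ U2 = 0) (h21 : σ₂ U1 = 0) :
    (∀ σ : G →+ ℝ, IsState P (U1 + U2) σ →
      ∀ g : G, σ g = σ U1 * σ₁ g + σ U2 * σ₂ g) ∧
    ∀ τ : G →+ ℝ, IsExtremalState P (U1 + U2) τ → τ = σ₁ ∨ τ = σ₂ := by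
  classical
  -- real-valued basic bounds
  have hr1R : ∀ n, (1:ℝ) < (r n : ℝ) := fun n => by exact_mod_cast hr1 n
  have hr2R : ∀ n, ((r n : ℚ) : ℝ) < 2 := fun n => by exact_mod_cast hr2 n
  have hrmonoR : ∀ n, ((r (n+1) : ℚ) : ℝ) ≤ (r n : ℝ) := fun n => by exact_mod_cast hrmono n
  have hr0R : ∀ n, (0:ℝ) < (r n : ℝ) := fun n => lt_trans one_pos (hr1R n)
  have hK0R : ∀ n, (0:ℝ) < (K n : ℝ) := fun n => by
    have := hK4 n; positivity
  have hK4R : ∀ n, (4:ℝ) ≤ (K n : ℝ) := fun n => by exact_mod_cast hK4 n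
  have hl4R : ∀ n, (4:ℝ) ≤ (l n : ℝ) := fun n => by exact_mod_cast hl4 n
  have hl0R : ∀ n, (0:ℝ) < (l n : ℝ) := fun n => lt_of_lt_of_le (by norm_num) (hl4R n)
  -- order-unit coordinate bounds, real multiplied form
  have hu00 : ∀ n (j : Fin (J n)), (K n : ℝ) ≤ (r n : ℝ) * (u n 0 0 j : ℝ) ∧
      (u n 0 0 j : ℝ) ≤ (r n : ℝ) * (K n : ℝ) := by
    intro n j
    have h1 : ((r n : ℚ) : ℝ)⁻¹ * (K n : ℝ) ≤ ((u n 0 0 j : ℤ) : ℝ) := by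
      exact_mod_cast (hcond4 n j).1.1
    have h2 : ((u n 0 0 j : ℤ) : ℝ) ≤ (r n : ℝ) * (K n : ℝ) := by
      exact_mod_cast (hcond4 n j).1.2
    constructor
    · rw [inv_mul_le_iff₀ (hr0R n)] at h1; exact h1
    · exact h2
  have hu11 : ∀ n (j : Fin (J n)), (K n : ℝ) ≤ (r n : ℝ) * (u n 1 1 j : ℝ) ∧
      (u n 1 1 j : ℝ) ≤ (r n : ℝ) * (K n : ℝ) := by
    intro n j
    have h1 : ((r n : ℚ) : ℝ)⁻¹ * (K n : ℝ) ≤ ((u n 1 1 j : ℤ) : ℝ) := by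
      exact_mod_cast (hcond4 n j).2.1.1
    have h2 : ((u n 1 1 j : ℤ) : ℝ) ≤ (r n : ℝ) * (K n : ℝ) := by
      exact_mod_cast (hcond4 n j).2.1.2
    constructor
    · rw [inv_mul_le_iff₀ (hr0R n)] at h1; exact h1
    · exact h2
  -- for the negative entries : K ≤ r * (l * (-u)) and l * (-u) ≤ r * K
  have hu01 : ∀ n (j : Fin (J n)), (K n : ℝ) ≤ (r n : ℝ) * ((l n : ℝ) * (-(u n 0 1 j : ℝ))) ∧
      (l n : ℝ) * (-(u n 0 1 j : ℝ)) ≤ (r n : ℝ) * (K n : ℝ) := by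
    intro n j
    have h1 : -((r n : ℝ) * (K n : ℝ)) ≤ (l n : ℝ) * ((u n 0 1 j : ℤ) : ℝ) := by
      exact_mod_cast (hcond4 n j).2.2.1.1
    have h2 : (l n : ℝ) * ((u n 0 1 j : ℤ) : ℝ) ≤ -(((r n : ℚ) : ℝ)⁻¹ * (K n : ℝ)) := by
      exact_mod_cast (hcond4 n j).2.2.1.2
    have hr0 := hr0R n
    constructor
    · have : ((r n : ℚ) : ℝ)⁻¹ * (K n : ℝ) ≤ (l n : ℝ) * (-(u n 0 1 j : ℝ)) := by
        push_cast at h2 ⊢; linarith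
      rw [inv_mul_le_iff₀ hr0] at this; exact this
    · push_cast at h1 ⊢; linarith
  have hu10 : ∀ n (j : Fin (J n)), (K n : ℝ) ≤ (r n : ℝ) * ((l n : ℝ) * (-(u n 1 0 j : ℝ))) ∧
      (l n : ℝ) * (-(u n 1 0 j : ℝ)) ≤ (r n : ℝ) * (K n : ℝ) := by
    intro n j
    have h1 : -((r n : ℝ) * (K n : ℝ)) ≤ (l n : ℝ) * ((u n 1 0 j : ℤ) : ℝ) := by
      exact_mod_cast (hcond4 n j).2.2.2.1
    have h2 : (l n : ℝ) * ((u n 1 0 j : ℤ) : ℝ) ≤ -(((r n : ℚ) : ℝ)⁻¹ * (K n : ℝ)) := by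
      exact_mod_cast (hcond4 n j).2.2.2.2
    have hr0 := hr0R n
    constructor
    · have : ((r n : ℚ) : ℝ)⁻¹ * (K n : ℝ) ≤ (l n : ℝ) * (-(u n 1 0 j : ℝ)) := by
        push_cast at h2 ⊢; linarith
      rw [inv_mul_le_iff₀ hr0] at this; exact this
    · push_cast at h1 ⊢; linarith
  -- matrix entry bounds
  have hA5 : ∀ n (j' j'' : Fin (J (n+1))) (j : Fin (J n)),
      ((A n 0 0 j' j : ℝ) ≤ (r n : ℝ) * ((l n : ℝ) * (A n 1 0 j'' j : ℝ)) ∧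
        (l n : ℝ) * (A n 1 0 j'' j : ℝ) ≤ (r n : ℝ) * (A n 0 0 j' j : ℝ)) ∧
      ((A n 1 1 j' j : ℝ) ≤ (r n : ℝ) * ((l n : ℝ) * (A n 0 1 j'' j : ℝ)) ∧
        (l n : ℝ) * (A n 0 1 j'' j : ℝ) ≤ (r n : ℝ) * (A n 1 1 j' j : ℝ)) := by
    intro n j' j'' j
    obtain ⟨⟨ha1, ha2⟩, ⟨hb1, hb2⟩⟩ := hcond5 n j' j'' j
    have ha1' : ((r n : ℚ) : ℝ)⁻¹ * (A n 0 0 j' j : ℝ) ≤ (l n : ℝ) * (A n 1 0 j'' j : ℝ) := by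
      exact_mod_cast ha1
    have hb1' : ((r n : ℚ) : ℝ)⁻¹ * (A n 1 1 j' j : ℝ) ≤ (l n : ℝ) * (A n 0 1 j'' j : ℝ) := by
      exact_mod_cast hb1
    rw [inv_mul_le_iff₀ (hr0R n)] at ha1' hb1'
    exact ⟨⟨ha1', by exact_mod_cast ha2⟩, ⟨hb1', by exact_mod_cast hb2⟩⟩
  have hApos : ∀ n (p q : Fin 2) j' j, (0:ℝ) < (A n p q j' j : ℝ) := by
    intro n p q j' j; exact_mod_cast hA n p q j' j
  have hA1 : ∀ n (p q : Fin 2) j' j, (1:ℝ) ≤ (A n p q j' j : ℝ) := by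
    intro n p q j' j; exact_mod_cast hA n p q j' j
  -- shift lemma
  have hshift : ∀ (k n : ℕ) x, η n x = η (n+k) (blockPush J A k n x) := by
    intro k
    induction k with
    | zero => intro n x; rfl
    | succ k ih =>
        intro n x
        rw [ih n x, hηcompat (n+k) (blockPush J A k n x)]
        rfl
  -- blockStep on basis vectors
  have hstep1 : ∀ n (j : Fin (J n)), blockStep J A n (Pi.single j 1, 0)
      = (fun j' => A n 0 0 j' j, fun j' => A n 1 0 j' j) := by
    intro n j
    unfold blockStep
    refine Prod.ext ?_ ?_ <;>
      · funext j'
        simp [Pi.single_apply, mul_ite, Finset.sum_ite_eq]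
  have hstep2 : ∀ n (j : Fin (J n)), blockStep J A n (0, Pi.single j 1)
      = (fun j' => A n 0 1 j' j, fun j' => A n 1 1 j' j) := by
    intro n j
    unfold blockStep
    refine Prod.ext ?_ ?_ <;>
      · funext j'
        simp [Pi.single_apply, mul_ite, Finset.sum_ite_eq]
  -- recursion for any hom
  have hrec : ∀ (ψ : G →+ ℝ) n (j : Fin (J n)),
      (ψ (η n (Pi.single j 1, 0)) = ∑ j', ((A n 0 0 j' j : ℝ) * ψ (η (n+1) (Pi.single j' 1, 0))
          + (A n 1 0 j' j : ℝ) * ψ (η (n+1) (0, Pi.single j' 1)))) ∧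
      (ψ (η n (0, Pi.single j 1)) = ∑ j', ((A n 0 1 j' j : ℝ) * ψ (η (n+1) (Pi.single j' 1, 0))
          + (A n 1 1 j' j : ℝ) * ψ (η (n+1) (0, Pi.single j' 1)))) := by
    intro ψ n j
    constructor
    · rw [hηcompat n (Pi.single j 1, 0), hstep1 n j]
      exact hom_eval (ψ.comp (η (n+1))) _
    · rw [hηcompat n (0, Pi.single j 1), hstep2 n j]
      exact hom_eval (ψ.comp (η (n+1))) _
  -- evaluation of a hom composed with η on U1, U2, arbitrary x
  have heval : ∀ (ψ : G →+ ℝ) n x, ψ (η n x)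
      = ∑ j, ((x.1 j : ℝ) * ψ (η n (Pi.single j 1, 0)) + (x.2 j : ℝ) * ψ (η n (0, Pi.single j 1))) :=
    fun ψ n x => hom_eval (ψ.comp (η n)) x
  -- positivity of basis values for states
  have hpos : ∀ (τ : G →+ ℝ), IsState P (U1+U2) τ → ∀ n (j : Fin (J n)),
      0 ≤ τ (η n (Pi.single j 1, 0)) ∧ 0 ≤ τ (η n (0, Pi.single j 1)) := by
    intro τ hτ n j
    constructor
    · refine hτ.1 _ ?_
      rw [hP]
      refine ⟨n, (Pi.single j 1, 0), fun i => ⟨?_, le_refl 0⟩, rfl⟩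
      by_cases h : i = j <;> simp [Pi.single_apply, h]
    · refine hτ.1 _ ?_
      rw [hP]
      refine ⟨n, (0, Pi.single j 1), fun i => ⟨le_refl 0, ?_⟩, rfl⟩
      by_cases h : i = j <;> simp [Pi.single_apply, h]
  -- choice of N
  obtain ⟨N, hNq⟩ : ∃ N, ∀ n, N ≤ n → r n ≤ 129/128 := by
    have h : ∀ᶠ n in Filter.atTop, r n ≤ 129/128 :=
      hrlim.eventually (eventually_le_nhds (by norm_num : (1:ℚ) < 129/128))
    exact Filter.eventually_atTop.mp h
  have hNR : ∀ n, N ≤ n → ((r n : ℚ) : ℝ) ≤ 129/128 := fun n hn => by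
    calc ((r n : ℚ) : ℝ) ≤ ((129/128 : ℚ) : ℝ) := by exact_mod_cast hNq n hn
      _ = 129/128 := by norm_num
  -- uniform bound on basis sums for states
  have hStateSum : ∀ (τ : G →+ ℝ), IsState P (U1+U2) τ → ∀ n, N ≤ n →
      (K n : ℝ) * (∑ j, (τ (η n (Pi.single j 1, 0)) + τ (η n (0, Pi.single j 1)))) ≤ 5/2 := by
    intro τ hτ n hn
    have hone : (1:ℝ) = ∑ j, (((u n 0 0 + u n 1 0) j : ℝ) * τ (η n (Pi.single j 1, 0))
        + ((u n 0 1 + u n 1 1) j : ℝ) * τ (η n (0, Pi.single j 1))) := by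
      have hUU : η n (u n 0 0 + u n 1 0, u n 0 1 + u n 1 1) = U1 + U2 := by
        rw [← hU1 n, ← hU2 n, ← map_add]
        rfl
      have h := heval τ n (u n 0 0 + u n 1 0, u n 0 1 + u n 1 1)
      rw [hUU, hτ.2] at h
      exact h
    have hr := hNR n hn
    have hr1' := hr1R n
    have hl := hl4R n
    have hKp := hK0R n
    have hcoef1 : ∀ j, (2/5) * (K n:ℝ) ≤ ((u n 0 0 + u n 1 0) j : ℝ) := by
      intro j
      have h1 := (hu00 n j).1
      have h2 := (hu10 n j).2
      have h3 := (hu10 n j).1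
      have hu0pos : 0 < (u n 0 0 j : ℝ) := by nlinarith only [h1, hKp, hr0R n]
      have hu10neg : 0 < -(u n 1 0 j : ℝ) := by
        nlinarith only [h3, hKp, mul_pos (hr0R n) (hl0R n)]
      have e1 : (4:ℝ) * (-(u n 1 0 j : ℝ)) ≤ (l n : ℝ) * (-(u n 1 0 j : ℝ)) := by
        nlinarith only [hu10neg, hl,
          mul_nonneg (by linarith : (0:ℝ) ≤ (l n:ℝ) - 4) (le_of_lt hu10neg)]
      have e2 : (u n 0 0 j : ℝ) ≥ (128/129) * (K n : ℝ) := by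
        nlinarith only [h1, hr, hu0pos, mul_le_mul_of_nonneg_right hr (le_of_lt hu0pos)]
      simp only [Pi.add_apply]
      push_cast
      nlinarith only [e1, e2, h2, hr, hKp, mul_le_mul_of_nonneg_right hr hKp.le]
    have hcoef2 : ∀ j, (2/5) * (K n:ℝ) ≤ ((u n 0 1 + u n 1 1) j : ℝ) := by
      intro j
      have h1 := (hu11 n j).1
      have h2 := (hu01 n j).2
      have hu0pos : 0 < (u n 1 1 j : ℝ) := by nlinarith only [h1, hKp, hr0R n]
      have hu01neg : 0 < -(u n 0 1 j : ℝ) := by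
        nlinarith only [(hu01 n j).1, hKp, mul_pos (hr0R n) (hl0R n)]
      have e1 : (4:ℝ) * (-(u n 0 1 j : ℝ)) ≤ (l n : ℝ) * (-(u n 0 1 j : ℝ)) := by
        nlinarith only [hu01neg, hl,
          mul_nonneg (by linarith : (0:ℝ) ≤ (l n:ℝ) - 4) (le_of_lt hu01neg)]
      have e2 : (u n 1 1 j : ℝ) ≥ (128/129) * (K n : ℝ) := by
        nlinarith only [h1, hr, hu0pos, mul_le_mul_of_nonneg_right hr (le_of_lt hu0pos)]
      simp only [Pi.add_apply]
      push_cast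
      nlinarith only [e1, e2, h2, hr, hKp, mul_le_mul_of_nonneg_right hr hKp.le]
    have hge : ∑ j, ((2/5) * (K n:ℝ) * τ (η n (Pi.single j 1, 0))
        + (2/5) * (K n:ℝ) * τ (η n (0, Pi.single j 1))) ≤ 1 := by
      rw [hone]
      refine Finset.sum_le_sum fun j _ => ?_
      have hp := hpos τ hτ n j
      exact add_le_add (mul_le_mul_of_nonneg_right (hcoef1 j) hp.1)
        (mul_le_mul_of_nonneg_right (hcoef2 j) hp.2)
    have heq : ∑ j, ((2/5) * (K n:ℝ) * τ (η n (Pi.single j 1, 0))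
        + (2/5) * (K n:ℝ) * τ (η n (0, Pi.single j 1)))
        = (2/5) * ((K n:ℝ) * ∑ j, (τ (η n (Pi.single j 1, 0)) + τ (η n (0, Pi.single j 1)))) := by
      rw [Finset.mul_sum, Finset.mul_sum]
      exact Finset.sum_congr rfl fun j _ => by ring
    rw [heq] at hge
    linarith
  -- bound on |τ U1|, |τ U2|
  have hUb : ∀ (τ : G →+ ℝ), IsState P (U1+U2) τ → |τ U1| ≤ 3 ∧ |τ U2| ≤ 3 := by
    intro τ hτ
    have hsum := hStateSum τ hτ N (le_refl N)
    have hKp := hK0R N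
    have hr := hNR N (le_refl N)
    have hr1' := hr1R N
    have hlN := hl4R N
    have habs00 : ∀ j : Fin (J N), |(u N 0 0 j : ℝ)| ≤ (129/128) * (K N:ℝ) := by
      intro j
      rw [abs_of_pos (by nlinarith only [(hu00 N j).1, hKp, hr0R N] : (0:ℝ) < (u N 0 0 j:ℝ))]
      nlinarith only [(hu00 N j).2, hr, hr1', hKp, mul_le_mul_of_nonneg_right hr hKp.le,
        (hu00 N j).1, hr0R N]
    have habs11 : ∀ j : Fin (J N), |(u N 1 1 j : ℝ)| ≤ (129/128) * (K N:ℝ) := by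
      intro j
      rw [abs_of_pos (by nlinarith only [(hu11 N j).1, hKp, hr0R N] : (0:ℝ) < (u N 1 1 j:ℝ))]
      nlinarith only [(hu11 N j).2, hr, hr1', hKp, mul_le_mul_of_nonneg_right hr hKp.le,
        (hu11 N j).1, hr0R N]
    have habs01 : ∀ j : Fin (J N), |(u N 0 1 j : ℝ)| ≤ (129/128) * (K N:ℝ) := by
      intro j
      have hneg : (0:ℝ) < -(u N 0 1 j:ℝ) := by
        nlinarith only [(hu01 N j).1, hKp, mul_pos (hr0R N) (hl0R N)]
      rw [abs_of_neg (by linarith : ((u N 0 1 j:ℝ)) < 0)]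
      nlinarith only [(hu01 N j).2, hneg, hlN, hKp, hr, hr1',
        mul_nonneg (by linarith : (0:ℝ) ≤ (l N:ℝ) - 1) hneg.le,
        mul_le_mul_of_nonneg_right hr hKp.le]
    have habs10 : ∀ j : Fin (J N), |(u N 1 0 j : ℝ)| ≤ (129/128) * (K N:ℝ) := by
      intro j
      have hneg : (0:ℝ) < -(u N 1 0 j:ℝ) := by
        nlinarith only [(hu10 N j).1, hKp, mul_pos (hr0R N) (hl0R N)]
      rw [abs_of_neg (by linarith : ((u N 1 0 j:ℝ)) < 0)]
      nlinarith only [(hu10 N j).2, hneg, hlN, hKp, hr, hr1',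
        mul_nonneg (by linarith : (0:ℝ) ≤ (l N:ℝ) - 1) hneg.le,
        mul_le_mul_of_nonneg_right hr hKp.le]
    have key : ∀ (w1 w2 : Fin (J N) → ℤ) (V : G), η N (w1, w2) = V →
        (∀ j, |(w1 j : ℝ)| ≤ (129/128) * (K N:ℝ)) →
        (∀ j, |(w2 j : ℝ)| ≤ (129/128) * (K N:ℝ)) → |τ V| ≤ 3 := by
      intro w1 w2 V hV hb1 hb2
      have h := heval τ N (w1, w2)
      rw [hV] at h
      rw [h]
      calc |∑ j, ((w1 j : ℝ) * τ (η N (Pi.single j 1, 0))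
            + (w2 j : ℝ) * τ (η N (0, Pi.single j 1)))|
          ≤ ∑ j, |(w1 j : ℝ) * τ (η N (Pi.single j 1, 0))
            + (w2 j : ℝ) * τ (η N (0, Pi.single j 1))| := Finset.abs_sum_le_sum_abs _ _
        _ ≤ ∑ j, ((129/128) * (K N:ℝ) * (τ (η N (Pi.single j 1, 0)) + τ (η N (0, Pi.single j 1)))) := by
            refine Finset.sum_le_sum fun j _ => ?_
            have hp := hpos τ hτ N j
            calc |(w1 j : ℝ) * τ (η N (Pi.single j 1, 0))
                  + (w2 j : ℝ) * τ (η N (0, Pi.single j 1))|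
                ≤ |(w1 j : ℝ)| * |τ (η N (Pi.single j 1, 0))|
                  + |(w2 j : ℝ)| * |τ (η N (0, Pi.single j 1))| := by
                  refine le_trans (abs_add_le _ _) ?_
                  rw [abs_mul, abs_mul]
              _ ≤ _ := by
                  rw [abs_of_nonneg hp.1, abs_of_nonneg hp.2, mul_add]
                  exact add_le_add (mul_le_mul_of_nonneg_right (hb1 j) hp.1)
                    (mul_le_mul_of_nonneg_right (hb2 j) hp.2)
        _ = (129/128) * ((K N:ℝ) * ∑ j, (τ (η N (Pi.single j 1, 0)) + τ (η N (0, Pi.single j 1)))) := by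
            rw [Finset.mul_sum, Finset.mul_sum]
            exact Finset.sum_congr rfl fun j _ => by ring
        _ ≤ (129/128) * (5/2) := by
            linarith only [hsum]
        _ ≤ 3 := by norm_num
    exact ⟨key (u N 0 0) (u N 0 1) U1 (hU1 N) habs00 habs01,
      key (u N 1 0) (u N 1 1) U2 (hU2 N) habs10 habs11⟩
  -- Part 1 : every state is the convex combination
  have main1 : ∀ σ : G →+ ℝ, IsState P (U1 + U2) σ →
      ∀ g : G, σ g = σ U1 * σ₁ g + σ U2 * σ₂ g := by
    intro σ hσ
    set F : G →+ ℝ := AddMonoidHom.mk' (fun g => σ g - σ U1 * σ₁ g - σ U2 * σ₂ g)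
      (fun x y => by simp only [map_add]; ring) with hFdef
    have hFapp : ∀ g, F g = σ g - σ U1 * σ₁ g - σ U2 * σ₂ g := fun g => rfl
    have hFU1 : F U1 = 0 := by rw [hFapp U1, h11, h21]; ring
    have hFU2 : F U2 = 0 := by rw [hFapp U2, h22, h12]; ring
    have hcon1 : ∀ n, ∑ j, ((u n 0 0 j : ℝ) * F (η n (Pi.single j 1, 0))
        + (u n 0 1 j : ℝ) * F (η n (0, Pi.single j 1))) = 0 := by
      intro n
      have h := heval F n (u n 0 0, u n 0 1)
      rw [hU1 n, hFU1] at h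
      exact h.symm
    have hcon2 : ∀ n, ∑ j, ((u n 1 0 j : ℝ) * F (η n (Pi.single j 1, 0))
        + (u n 1 1 j : ℝ) * F (η n (0, Pi.single j 1))) = 0 := by
      intro n
      have h := heval F n (u n 1 0, u n 1 1)
      rw [hU2 n, hFU2] at h
      exact h.symm
    -- base bound on the total variation at each level
    have hbase : ∀ n, N ≤ n →
        (K n:ℝ) * (∑ j, (|F (η n (Pi.single j 1, 0))| + |F (η n (0, Pi.single j 1))|)) ≤ 18 := by
      intro n hn
      have hs := hStateSum σ hσ n hn
      have hs1 := hStateSum σ₁ hσ₁ n hn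
      have hs2 := hStateSum σ₂ hσ₂ n hn
      have hb1 := (hUb σ hσ).1
      have hb2 := (hUb σ hσ).2
      have hb1' := abs_le.mp hb1
      have hb2' := abs_le.mp hb2
      have hptw : ∀ j : Fin (J n), |F (η n (Pi.single j 1, 0))| + |F (η n (0, Pi.single j 1))|
          ≤ (σ (η n (Pi.single j 1, 0)) + σ (η n (0, Pi.single j 1)))
            + 3 * (σ₁ (η n (Pi.single j 1, 0)) + σ₁ (η n (0, Pi.single j 1)))
            + 3 * (σ₂ (η n (Pi.single j 1, 0)) + σ₂ (η n (0, Pi.single j 1))) := by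
        intro j
        have hpσ := hpos σ hσ n j
        have hpσ1 := hpos σ₁ hσ₁ n j
        have hpσ2 := hpos σ₂ hσ₂ n j
        have e1 : |F (η n (Pi.single j 1, 0))| ≤ σ (η n (Pi.single j 1, 0))
            + 3 * σ₁ (η n (Pi.single j 1, 0)) + 3 * σ₂ (η n (Pi.single j 1, 0)) := by
          rw [hFapp, abs_le]
          constructor <;>
            nlinarith only [mul_le_mul_of_nonneg_right hb1'.2 hpσ1.1,
              mul_le_mul_of_nonneg_right hb1'.1 hpσ1.1,
              mul_le_mul_of_nonneg_right hb2'.2 hpσ2.1,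
              mul_le_mul_of_nonneg_right hb2'.1 hpσ2.1, hpσ.1]
        have e2 : |F (η n (0, Pi.single j 1))| ≤ σ (η n (0, Pi.single j 1))
            + 3 * σ₁ (η n (0, Pi.single j 1)) + 3 * σ₂ (η n (0, Pi.single j 1)) := by
          rw [hFapp, abs_le]
          constructor <;>
            nlinarith only [mul_le_mul_of_nonneg_right hb1'.2 hpσ1.2,
              mul_le_mul_of_nonneg_right hb1'.1 hpσ1.2,
              mul_le_mul_of_nonneg_right hb2'.2 hpσ2.2,
              mul_le_mul_of_nonneg_right hb2'.1 hpσ2.2, hpσ.2]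
        linarith
      have hsumle : ∑ j, (|F (η n (Pi.single j 1, 0))| + |F (η n (0, Pi.single j 1))|)
          ≤ (∑ j, (σ (η n (Pi.single j 1, 0)) + σ (η n (0, Pi.single j 1))))
            + 3 * (∑ j, (σ₁ (η n (Pi.single j 1, 0)) + σ₁ (η n (0, Pi.single j 1))))
            + 3 * (∑ j, (σ₂ (η n (Pi.single j 1, 0)) + σ₂ (η n (0, Pi.single j 1)))) := by
        calc ∑ j, (|F (η n (Pi.single j 1, 0))| + |F (η n (0, Pi.single j 1))|)
            ≤ ∑ j, ((σ (η n (Pi.single j 1, 0)) + σ (η n (0, Pi.single j 1)))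
              + 3 * (σ₁ (η n (Pi.single j 1, 0)) + σ₁ (η n (0, Pi.single j 1)))
              + 3 * (σ₂ (η n (Pi.single j 1, 0)) + σ₂ (η n (0, Pi.single j 1)))) :=
              Finset.sum_le_sum fun j _ => hptw j
          _ = _ := by
              rw [Finset.sum_add_distrib, Finset.sum_add_distrib, Finset.mul_sum, Finset.mul_sum]
      nlinarith only [hs, hs1, hs2,
        mul_le_mul_of_nonneg_left hsumle (le_of_lt (hK0R n))]
    -- the contraction step
    have hstep : ∀ n, N ≤ n →
        (K n:ℝ) * (∑ j, (|F (η n (Pi.single j 1, 0))| + |F (η n (0, Pi.single j 1))|))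
        ≤ (1/2) * ((K (n+1):ℝ) * (∑ j', (|F (η (n+1) (Pi.single j' 1, 0))|
          + |F (η (n+1) (0, Pi.single j' 1))|))) := by
      intro n hn
      have hcomp00' : ∀ j' : Fin (J (n+1)), ((u (n+1) 0 0 j' : ℤ) : ℝ)
          = ∑ j, ((A n 0 0 j' j : ℝ) * (u n 0 0 j : ℝ) + (A n 0 1 j' j : ℝ) * (u n 0 1 j : ℝ)) := by
        intro j'
        exact_mod_cast congrArg (fun z : ℤ => (z : ℝ)) (hcompat n 0 0 j')
      have hcomp11' : ∀ j' : Fin (J (n+1)), ((u (n+1) 1 1 j' : ℤ) : ℝ)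
          = ∑ j, ((A n 1 0 j' j : ℝ) * (u n 1 0 j : ℝ) + (A n 1 1 j' j : ℝ) * (u n 1 1 j : ℝ)) := by
        intro j'
        exact_mod_cast congrArg (fun z : ℤ => (z : ℝ)) (hcompat n 1 1 j')
      have hv00b' : ∀ j' : Fin (J (n+1)), ((u (n+1) 0 0 j' : ℤ) : ℝ) ≤ ((r n : ℚ):ℝ) * (K (n+1):ℝ) := by
        intro j'
        have h := (hu00 (n+1) j').2
        nlinarith only [h, hrmonoR n, hK0R (n+1)]
      have hv11b' : ∀ j' : Fin (J (n+1)), ((u (n+1) 1 1 j' : ℤ) : ℝ) ≤ ((r n : ℚ):ℝ) * (K (n+1):ℝ) := by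
        intro j'
        have h := (hu11 (n+1) j').2
        nlinarith only [h, hrmonoR n, hK0R (n+1)]
      exact step_est (J n) (J (n+1)) (hJ n) (hJ (n+1))
        ((r n : ℚ):ℝ) (l n) (K n) (K (n+1)) (hr1R n) (hNR n hn) (hl4R n) (hK0R n) (hK0R (n+1))
        (fun j' j => (A n 0 0 j' j : ℝ)) (fun j' j => (A n 0 1 j' j : ℝ))
        (fun j' j => (A n 1 0 j' j : ℝ)) (fun j' j => (A n 1 1 j' j : ℝ))
        (fun j' j => hApos n 0 0 j' j) (fun j' j => hApos n 0 1 j' j)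
        (fun j' j => hApos n 1 0 j' j) (fun j' j => hApos n 1 1 j' j)
        (fun j => (u n 0 0 j : ℝ)) (fun j => (u n 0 1 j : ℝ))
        (fun j => (u n 1 0 j : ℝ)) (fun j => (u n 1 1 j : ℝ))
        (fun j' => (u (n+1) 0 0 j' : ℝ)) (fun j' => (u (n+1) 1 1 j' : ℝ))
        (fun j' => F (η (n+1) (Pi.single j' 1, 0))) (fun j' => F (η (n+1) (0, Pi.single j' 1)))
        (fun j => F (η n (Pi.single j 1, 0))) (fun j => F (η n (0, Pi.single j 1)))
        (fun j => (hrec F n j).1) (fun j => (hrec F n j).2)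
        (hcon1 n) (hcon2 n)
        (fun j => hu00 n j) (fun j => hu11 n j) (fun j => hu01 n j) (fun j => hu10 n j)
        (fun j' j'' j => (hA5 n j' j'' j).1) (fun j' j'' j => (hA5 n j' j'' j).2)
        hcomp00' hcomp11' hv00b' hv11b'
    -- iterate
    have hdecay : ∀ k n, N ≤ n →
        (K n:ℝ) * (∑ j, (|F (η n (Pi.single j 1, 0))| + |F (η n (0, Pi.single j 1))|))
        ≤ (1/2)^k * 18 := by
      intro k
      induction k with
      | zero => intro n hn; simpa using hbase n hn
      | succ k ih =>
          intro n hn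
          have h1 := hstep n hn
          have h2 := ih (n+1) (le_trans hn (Nat.le_succ n))
          calc (K n:ℝ) * (∑ j, (|F (η n (Pi.single j 1, 0))| + |F (η n (0, Pi.single j 1))|))
              ≤ (1/2) * ((K (n+1):ℝ) * (∑ j', (|F (η (n+1) (Pi.single j' 1, 0))|
                + |F (η (n+1) (0, Pi.single j' 1))|))) := h1
            _ ≤ (1/2) * ((1/2)^k * 18) := by linarith
            _ = (1/2)^(k+1) * 18 := by ring
    have hzero : ∀ n, N ≤ n → ∀ j : Fin (J n),
        F (η n (Pi.single j 1, 0)) = 0 ∧ F (η n (0, Pi.single j 1)) = 0 := by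
      intro n hn
      have hsnn : (0:ℝ) ≤ ∑ j, (|F (η n (Pi.single j 1, 0))| + |F (η n (0, Pi.single j 1))|) :=
        Finset.sum_nonneg fun j _ => by positivity
      have hsz : ∑ j, (|F (η n (Pi.single j 1, 0))| + |F (η n (0, Pi.single j 1))|) = 0 := by
        by_contra hne0
        have hpos' : 0 < ∑ j, (|F (η n (Pi.single j 1, 0))| + |F (η n (0, Pi.single j 1))|) :=
          lt_of_le_of_ne hsnn (Ne.symm hne0)
        have hKs : 0 < (K n:ℝ) * ∑ j, (|F (η n (Pi.single j 1, 0))| + |F (η n (0, Pi.single j 1))|) :=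
          mul_pos (hK0R n) hpos'
        obtain ⟨k, hk⟩ := exists_pow_lt_of_lt_one
          (show (0:ℝ) < ((K n:ℝ) * ∑ j, (|F (η n (Pi.single j 1, 0))|
            + |F (η n (0, Pi.single j 1))|)) / 18 by positivity)
          (by norm_num : (1:ℝ)/2 < 1)
        have := hdecay k n hn
        have h18 : ((1:ℝ)/2)^k * 18 < (K n:ℝ) * ∑ j, (|F (η n (Pi.single j 1, 0))|
            + |F (η n (0, Pi.single j 1))|) := by
          rw [lt_div_iff₀ (by norm_num : (0:ℝ) < 18)] at hk
          linarith
        linarith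
      intro j
      have hterm := (Finset.sum_eq_zero_iff_of_nonneg (fun j _ => by positivity)).mp hsz j
        (Finset.mem_univ j)
      constructor <;> [skip; skip] <;>
        · rw [← abs_eq_zero]
          nlinarith only [hterm, abs_nonneg (F (η n (Pi.single j 1, 0))),
            abs_nonneg (F (η n (0, Pi.single j 1)))]
    have hFall : ∀ g, F g = 0 := by
      intro g
      obtain ⟨n, x, rfl⟩ := hsurj g
      rw [hshift N n x, heval F]
      refine Finset.sum_eq_zero fun j _ => ?_
      rw [(hzero (n+N) (Nat.le_add_left N n) j).1, (hzero (n+N) (Nat.le_add_left N n) j).2]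
      ring
    intro g
    have := hFall g
    rw [hFapp] at this
    linarith
  -- nonnegativity of τ U1 and τ U2 for any state
  have hUnn : ∀ (τ : G →+ ℝ), IsState P (U1+U2) τ → 0 ≤ τ U1 ∧ 0 ≤ τ U2 := by
    intro τ hτ
    constructor
    · by_contra hneg
      push_neg at hneg
      obtain ⟨M, hM⟩ := exists_nat_gt (3 / (-(τ U1)))
      set n := max N M with hn
      have hnN : N ≤ n := le_max_left _ _
      have hlM : (3 / (-(τ U1))) < (l n : ℝ) := by
        calc (3 / (-(τ U1))) < (M:ℝ) := hM
          _ ≤ (n:ℝ) := by exact_mod_cast le_max_right N M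
          _ ≤ (l n : ℝ) := by exact_mod_cast hl.le_apply
      have h := heval τ n (u n 0 0, u n 0 1)
      rw [hU1 n] at h
      have hp := hpos τ hτ n
      have hKp := hK0R n
      have hr := hNR n hnN
      have h1 : 0 ≤ ∑ j, (u n 0 0 j : ℝ) * τ (η n (Pi.single j 1, 0)) :=
        Finset.sum_nonneg fun j _ => mul_nonneg
          (le_of_lt (by nlinarith only [(hu00 n j).1, hKp, hr0R n] : (0:ℝ) < (u n 0 0 j:ℝ)))
          (hp j).1
      have h2 : (l n : ℝ) * (∑ j, -((u n 0 1 j : ℝ) * τ (η n (0, Pi.single j 1)))) ≤ 3 := by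
        have hsum := hStateSum τ hτ n hnN
        calc (l n : ℝ) * (∑ j, -((u n 0 1 j : ℝ) * τ (η n (0, Pi.single j 1))))
            = ∑ j, ((l n : ℝ) * (-(u n 0 1 j : ℝ))) * τ (η n (0, Pi.single j 1)) := by
              rw [Finset.mul_sum]
              exact Finset.sum_congr rfl fun j _ => by ring
          _ ≤ ∑ j, ((129/128) * (K n:ℝ)) * (τ (η n (Pi.single j 1, 0)) + τ (η n (0, Pi.single j 1))) := by
              refine Finset.sum_le_sum fun j _ => ?_
              have hc : (l n : ℝ) * (-(u n 0 1 j : ℝ)) ≤ (129/128) * (K n:ℝ) := by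
                nlinarith only [(hu01 n j).2, hr, hKp, hr1R n,
                  mul_le_mul_of_nonneg_right hr hKp.le]
              have hc0 : (0:ℝ) ≤ (l n : ℝ) * (-(u n 0 1 j : ℝ)) := by
                nlinarith only [(hu01 n j).1, hKp, hr0R n, mul_pos (hr0R n) (hl0R n)]
              nlinarith only [mul_le_mul_of_nonneg_right hc (hp j).2,
                mul_nonneg (by nlinarith only [hc, hc0, hKp] : (0:ℝ) ≤ (129/128) * (K n:ℝ)) (hp j).1]
          _ = (129/128) * ((K n:ℝ) * ∑ j, (τ (η n (Pi.single j 1, 0)) + τ (η n (0, Pi.single j 1)))) := by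
              rw [Finset.mul_sum, Finset.mul_sum]
              exact Finset.sum_congr rfl fun j _ => by ring
          _ ≤ (129/128) * (5/2) := by linarith only [hsum]
          _ ≤ 3 := by norm_num
      have h3 : -(τ U1) ≤ ∑ j, -((u n 0 1 j:ℝ) * τ (η n (0, Pi.single j 1))) := by
        rw [h, Finset.sum_add_distrib]
        rw [show (∑ j, -((u n 0 1 j:ℝ) * τ (η n (0, Pi.single j 1))))
          = -∑ j, ((u n 0 1 j:ℝ) * τ (η n (0, Pi.single j 1))) from Finset.sum_neg_distrib _]
        linarith only [h1]
      have h4 : 3 < (l n:ℝ) * (-(τ U1)) := by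
        have hpos0 : (0:ℝ) < -(τ U1) := by linarith
        rw [div_lt_iff₀ hpos0] at hlM
        linarith
      have h5 := mul_le_mul_of_nonneg_left h3 (by linarith [hl0R n] : (0:ℝ) ≤ (l n:ℝ))
      linarith
    · by_contra hneg
      push_neg at hneg
      obtain ⟨M, hM⟩ := exists_nat_gt (3 / (-(τ U2)))
      set n := max N M with hn
      have hnN : N ≤ n := le_max_left _ _
      have hlM : (3 / (-(τ U2))) < (l n : ℝ) := by
        calc (3 / (-(τ U2))) < (M:ℝ) := hM
          _ ≤ (n:ℝ) := by exact_mod_cast le_max_right N M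
          _ ≤ (l n : ℝ) := by exact_mod_cast hl.le_apply
      have h := heval τ n (u n 1 0, u n 1 1)
      rw [hU2 n] at h
      have hp := hpos τ hτ n
      have hKp := hK0R n
      have hr := hNR n hnN
      have h1 : 0 ≤ ∑ j, (u n 1 1 j : ℝ) * τ (η n (0, Pi.single j 1)) :=
        Finset.sum_nonneg fun j _ => mul_nonneg
          (le_of_lt (by nlinarith only [(hu11 n j).1, hKp, hr0R n] : (0:ℝ) < (u n 1 1 j:ℝ)))
          (hp j).2
      have h2 : (l n : ℝ) * (∑ j, -((u n 1 0 j : ℝ) * τ (η n (Pi.single j 1, 0)))) ≤ 3 := by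
        have hsum := hStateSum τ hτ n hnN
        calc (l n : ℝ) * (∑ j, -((u n 1 0 j : ℝ) * τ (η n (Pi.single j 1, 0))))
            = ∑ j, ((l n : ℝ) * (-(u n 1 0 j : ℝ))) * τ (η n (Pi.single j 1, 0)) := by
              rw [Finset.mul_sum]
              exact Finset.sum_congr rfl fun j _ => by ring
          _ ≤ ∑ j, ((129/128) * (K n:ℝ)) * (τ (η n (Pi.single j 1, 0)) + τ (η n (0, Pi.single j 1))) := by
              refine Finset.sum_le_sum fun j _ => ?_
              have hc : (l n : ℝ) * (-(u n 1 0 j : ℝ)) ≤ (129/128) * (K n:ℝ) := by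
                nlinarith only [(hu10 n j).2, hr, hKp, hr1R n,
                  mul_le_mul_of_nonneg_right hr hKp.le]
              have hc0 : (0:ℝ) ≤ (l n : ℝ) * (-(u n 1 0 j : ℝ)) := by
                nlinarith only [(hu10 n j).1, hKp, hr0R n, mul_pos (hr0R n) (hl0R n)]
              nlinarith only [mul_le_mul_of_nonneg_right hc (hp j).1,
                mul_nonneg (by nlinarith only [hc, hc0, hKp] : (0:ℝ) ≤ (129/128) * (K n:ℝ)) (hp j).2]
          _ = (129/128) * ((K n:ℝ) * ∑ j, (τ (η n (Pi.single j 1, 0)) + τ (η n (0, Pi.single j 1)))) := by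
              rw [Finset.mul_sum, Finset.mul_sum]
              exact Finset.sum_congr rfl fun j _ => by ring
          _ ≤ (129/128) * (5/2) := by linarith only [hsum]
          _ ≤ 3 := by norm_num
      have h3 : -(τ U2) ≤ ∑ j, -((u n 1 0 j:ℝ) * τ (η n (Pi.single j 1, 0))) := by
        rw [h, Finset.sum_add_distrib]
        rw [show (∑ j, -((u n 1 0 j:ℝ) * τ (η n (Pi.single j 1, 0))))
          = -∑ j, ((u n 1 0 j:ℝ) * τ (η n (Pi.single j 1, 0))) from Finset.sum_neg_distrib _]
        linarith only [h1]
      have h4 : 3 < (l n:ℝ) * (-(τ U2)) := by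
        have hpos0 : (0:ℝ) < -(τ U2) := by linarith
        rw [div_lt_iff₀ hpos0] at hlM
        linarith
      have h5 := mul_le_mul_of_nonneg_left h3 (by linarith [hl0R n] : (0:ℝ) ≤ (l n:ℝ))
      linarith
  refine ⟨main1, ?_⟩
  -- Part 2 : extremal states
  intro τ hτe
  obtain ⟨hτs, hext⟩ := hτe
  have h1 : ∀ g, τ g = τ U1 * σ₁ g + τ U2 * σ₂ g := main1 τ hτs
  have hsum : τ U1 + τ U2 = 1 := by rw [← map_add]; exact hτs.2
  obtain ⟨h01, h02⟩ := hUnn τ hτs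
  rcases eq_or_lt_of_le h01 with h|h
  · right
    ext g
    have hτ2 : τ U2 = 1 := by linarith
    rw [h1 g, ← h, hτ2]
    ring
  · rcases eq_or_lt_of_le h02 with h2|h2
    · left
      ext g
      have hτ1 : τ U1 = 1 := by linarith
      rw [h1 g, ← h2, hτ1]
      ring
    · have hlt1 : τ U1 < 1 := by linarith
      have heq12 : σ₁ = σ₂ := by
        refine hext σ₁ σ₂ hσ₁ hσ₂ (τ U1) h hlt1 fun g => ?_
        rw [h1 g, show (1:ℝ) - τ U1 = τ U2 by linarith]
      left
      ext g
      rw [h1 g, ← heq12]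
      have : τ U1 * σ₁ g + τ U2 * σ₁ g = σ₁ g := by rw [← add_mul, hsum, one_mul]
      linarith
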